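/- Let E and F be the 3×3 real matrices E = [[2,0,1],[2,0,2],[2,0,1]] and F = [[2,1,0],[2,1,0],[2,0,1]], and for a 3×3 matrix T = [t_{ij}] let ‖T‖ = ∑_{i,j} |t_{ij}|. Then the joint spectral radius of {E, F}, namely limsup_{n→∞} max{‖T_1 T_2 ⋯ T_n‖^{1/n} : each T_i ∈ {E, F}}, equals √((9 + √105)/2), which is the square root of the spectral radius of the product FE. -/

import Mathlib

open Matrix

/-- The matrix `E = [[2,0,1],[2,0,2],[2,0,1]]`. -/
def matE : Matrix (Fin 3) (Fin 3) ℝ := !![2, 0, 1; 2, 0, 2; 2, 0, 1]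

/-- The matrix `F = [[2,1,0],[2,1,0],[2,0,1]]`. -/
def matF : Matrix (Fin 3) (Fin 3) ℝ := !![2, 1, 0; 2, 1, 0; 2, 0, 1]

/-- The norm `‖T‖ = ∑_{i,j} |t_{ij}|`, the sum of absolute values of the entries. -/
def normSum (T : Matrix (Fin 3) (Fin 3) ℝ) : ℝ := ∑ i, ∑ j, |T i j|

noncomputable section

namespace JSRaux

def ρ : ℝ := (9 + Real.sqrt 105) / 2
def r : ℝ := Real.sqrt ρ

lemma sqrt105_lb : (9.8:ℝ) ≤ Real.sqrt 105 := by
  nlinarith [Real.sq_sqrt (show (0:ℝ) ≤ 105 by norm_num), Real.sqrt_nonneg 105]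
lemma sqrt105_ub : Real.sqrt 105 ≤ 10.3 := by
  nlinarith [Real.sq_sqrt (show (0:ℝ) ≤ 105 by norm_num), Real.sqrt_nonneg 105]

lemma hρlb : (9.4:ℝ) ≤ ρ := by unfold ρ; linarith [sqrt105_lb]
lemma hρub : ρ ≤ 10 := by unfold ρ; linarith [sqrt105_ub]
lemma hρpos : 0 < ρ := by linarith [hρlb]
lemma hρ2 : ρ^2 = 9*ρ + 6 := by
  unfold ρ
  have := Real.sq_sqrt (show (0:ℝ) ≤ 105 by norm_num)
  ring_nf
  nlinarith [this]
lemma hr2 : r^2 = ρ := Real.sq_sqrt hρpos.le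
lemma hrpos : 0 < r := Real.sqrt_pos.2 hρpos
lemma hrlb : 3 ≤ r := by nlinarith [hr2, hρlb, hrpos]
lemma hrub : r ≤ 4 := by nlinarith [hr2, hρub, hrpos]

lemma sq_le_imp {c Y : ℝ} (hc : 0 ≤ c) (hY : 0 ≤ Y) (h : c^2 ≤ Y^2) : c ≤ Y := by
  nlinarith [h, hc, hY]

def v : Fin 3 → ℝ := ![1, (ρ-7)/2, 1]
def w1 : Fin 3 → ℝ := ![(ρ-3)/(2*r), (ρ-3)/(2*r), 3/r]
def w2 : Fin 3 → ℝ := ![3*(ρ-3)/(2*ρ), 3*(ρ-3)/(2*ρ), 1]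

lemma key2 : 4 ≤ r * ((ρ-7)/2) := by
  have hX : 0 ≤ r * (ρ - 7) := mul_nonneg hrpos.le (by linarith [hρlb])
  have hX2 : (r * (ρ-7))^2 = 10*ρ - 30 := by
    have h : (r*(ρ-7))^2 = r^2 * (ρ-7)^2 := by ring
    rw [h, hr2]
    linear_combination (ρ-5)*hρ2
  have : 8 ≤ r * (ρ - 7) := by
    refine sq_le_imp (by norm_num) hX ?_
    rw [hX2]; nlinarith [hρlb]
  linarith

lemma key3 : 3*(ρ-3)/ρ + 1 ≤ r := by
  have hY : 0 ≤ r * ρ := mul_nonneg hrpos.le hρpos.le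
  have hY2 : (r*ρ)^2 = 87*ρ + 54 := by
    have h : (r*ρ)^2 = r^2 * ρ^2 := by ring
    rw [h, hr2]; linear_combination (ρ+9)*hρ2
  have h1 : 4*ρ - 9 ≤ r * ρ := by
    refine sq_le_imp (by nlinarith [hρlb]) hY ?_
    rw [hY2]; nlinarith [hρlb, hρ2]
  rw [div_add' _ _ _ (ne_of_gt hρpos), div_le_iff₀ hρpos]
  nlinarith [h1]

lemma key4 : 3*(ρ-3)/ρ + 2 ≤ r * ((ρ-7)/2) := by
  have h7 : (0:ℝ) ≤ ρ - 7 := by linarith [hρlb]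
  have hZ : 0 ≤ r * ρ * (ρ - 7) := mul_nonneg (mul_nonneg hrpos.le hρpos.le) h7
  have hZ2 : (r * ρ * (ρ-7))^2 = 600*ρ + 360 := by
    have h : (r*ρ*(ρ-7))^2 = r^2 * (ρ^2 * (ρ-7)^2) := by ring
    rw [h, hr2]; linear_combination (ρ^3 - 5*ρ^2 + 10*ρ + 60)*hρ2
  have h1 : 10*ρ - 18 ≤ r * ρ * (ρ - 7) := by
    refine sq_le_imp (by nlinarith [hρlb]) hZ ?_
    rw [hZ2]; nlinarith [hρlb, hρ2]
  rw [div_add' _ _ _ (ne_of_gt hρpos), div_le_iff₀ hρpos]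
  nlinarith [h1]

lemma hEnn : ∀ i j, 0 ≤ matE i j := by
  intro i j; fin_cases i <;> fin_cases j <;> norm_num [matE]
lemma hFnn : ∀ i j, 0 ≤ matF i j := by
  intro i j; fin_cases i <;> fin_cases j <;> norm_num [matF]

lemma v_nn : ∀ i, 0 ≤ v i := by
  intro i; fin_cases i <;> simp [v] <;> linarith [hρlb]
lemma w1_nn : ∀ i, 0 ≤ w1 i := by
  intro i; fin_cases i <;> simp [w1] <;>
    exact div_nonneg (by linarith [hρlb]) (by linarith [hrlb])
lemma w2_nn : ∀ i, 0 ≤ w2 i := by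
  intro i; fin_cases i <;> simp [w2] <;>
    exact div_nonneg (by linarith [hρlb]) (by linarith [hρlb])

lemma v_ge_one : ∀ i, 1 ≤ v i := by
  intro i; fin_cases i <;> simp [v] <;> linarith [hρlb]

lemma v_le_two : ∀ i, v i ≤ 2 := by
  intro i; fin_cases i <;> simp [v] <;> linarith [hρub]
lemma w1_le_two : ∀ i, w1 i ≤ 2 := by
  intro i; fin_cases i <;> simp [w1] <;> rw [div_le_iff₀ (by linarith [hrlb])] <;>
    nlinarith [hρub, hrlb, hρlb]
lemma w2_le_two : ∀ i, w2 i ≤ 2 := by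
  intro i; fin_cases i <;> simp [w2] <;> rw [div_le_iff₀ (by linarith [hρlb])] <;>
    nlinarith [hρub, hρlb]

lemma step_Ev : ∀ i, matE.mulVec v i ≤ r * v i := by
  intro i; fin_cases i <;>
    simp [matE, v, Matrix.mulVec, dotProduct, Fin.sum_univ_three, Matrix.vecHead, Matrix.vecTail]
  · linarith [hrlb]
  · linarith [key2]
  · linarith [hrlb]

lemma step_Fv : ∀ i, matF.mulVec v i ≤ r * w1 i := by
  have hrne : r ≠ 0 := ne_of_gt hrpos
  intro i; fin_cases i <;>
    simp [matF, v, w1, Matrix.mulVec, dotProduct, Fin.sum_univ_three, Matrix.vecHead, Matrix.vecTail]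
  · have e : r * ((ρ-3)/(2*r)) = (ρ-3)/2 := by field_simp
    rw [e]; linarith
  · have e : r * ((ρ-3)/(2*r)) = (ρ-3)/2 := by field_simp
    rw [e]; linarith
  · have e : r * (3/r) = 3 := by field_simp
    rw [e]; norm_num

lemma step_Ew1 : ∀ i, matE.mulVec w1 i ≤ r * v i := by
  have hrne : r ≠ 0 := ne_of_gt hrpos
  intro i; fin_cases i <;>
    simp [matE, v, w1, Matrix.mulVec, dotProduct, Fin.sum_univ_three, Matrix.vecHead, Matrix.vecTail]
  · have e : 2*((ρ-3)/(2*r)) + 3/r = ρ/r := by field_simp; ring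
    rw [e, div_le_iff₀ hrpos]; nlinarith [hr2]
  · have e : 2*((ρ-3)/(2*r)) + 2*(3/r) = (ρ+3)/r := by field_simp; ring
    rw [e, div_le_iff₀ hrpos]
    have e2 : r*((ρ-7)/2)*r = ρ + 3 := by linear_combination ((ρ-7)/2)*hr2 + (1/2)*hρ2
    linarith [e2]
  · have e : 2*((ρ-3)/(2*r)) + 3/r = ρ/r := by field_simp; ring
    rw [e, div_le_iff₀ hrpos]; nlinarith [hr2]

lemma step_Fw1 : ∀ i, matF.mulVec w1 i ≤ r * w2 i := by
  have hrne : r ≠ 0 := ne_of_gt hrpos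
  intro i; fin_cases i <;>
    simp [matF, w1, w2, Matrix.mulVec, dotProduct, Fin.sum_univ_three, Matrix.vecHead, Matrix.vecTail]
  · have e : r*(3*(ρ-3)/(2*ρ)) = 2*((ρ-3)/(2*r)) + (ρ-3)/(2*r) := by
      rw [← hr2]; field_simp; ring
    linarith [e]
  · have e : r*(3*(ρ-3)/(2*ρ)) = 2*((ρ-3)/(2*r)) + (ρ-3)/(2*r) := by
      rw [← hr2]; field_simp; ring
    linarith [e]
  · have e : 2*((ρ-3)/(2*r)) + 3/r = ρ/r := by field_simp; ring
    rw [e, div_le_iff₀ hrpos]; nlinarith [hr2]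

lemma step_Ew2 : ∀ i, matE.mulVec w2 i ≤ r * v i := by
  have hρne : ρ ≠ 0 := ne_of_gt hρpos
  have e : 2*(3*(ρ-3)/(2*ρ)) = 3*(ρ-3)/ρ := by field_simp
  intro i; fin_cases i <;>
    simp [matE, v, w2, Matrix.mulVec, dotProduct, Fin.sum_univ_three, Matrix.vecHead, Matrix.vecTail]
  · linarith [key3, e]
  · linarith [key4, e]
  · linarith [key3, e]

lemma step_Fw2 : ∀ i, matF.mulVec w2 i ≤ r * w2 i := by
  have hρne : ρ ≠ 0 := ne_of_gt hρpos
  have hc : 0 ≤ 3*(ρ-3)/(2*ρ) :=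
    div_nonneg (by linarith [hρlb]) (by linarith [hρlb])
  have e : 2*(3*(ρ-3)/(2*ρ)) = 3*(ρ-3)/ρ := by field_simp
  intro i; fin_cases i <;>
    simp [matF, w2, Matrix.mulVec, dotProduct, Fin.sum_univ_three, Matrix.vecHead, Matrix.vecTail]
  · nlinarith [hrlb, hc]
  · nlinarith [hrlb, hc]
  · linarith [key3, e]

lemma step (T p : _) (hT : T = matE ∨ T = matF) (hp : p = v ∨ p = w1 ∨ p = w2) :
    ∃ q, (q = v ∨ q = w1 ∨ q = w2) ∧ ∀ i, T.mulVec p i ≤ r * q i := by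
  rcases hT with rfl | rfl <;> rcases hp with rfl | rfl | rfl
  · exact ⟨v, Or.inl rfl, step_Ev⟩
  · exact ⟨v, Or.inl rfl, step_Ew1⟩
  · exact ⟨v, Or.inl rfl, step_Ew2⟩
  · exact ⟨w1, Or.inr (Or.inl rfl), step_Fv⟩
  · exact ⟨w2, Or.inr (Or.inr rfl), step_Fw1⟩
  · exact ⟨w2, Or.inr (Or.inr rfl), step_Fw2⟩

lemma q_le_two (q : Fin 3 → ℝ) (hq : q = v ∨ q = w1 ∨ q = w2) : ∀ i, q i ≤ 2 := by
  rcases hq with rfl | rfl | rfl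
  exacts [v_le_two, w1_le_two, w2_le_two]

lemma Tnn (T : Matrix (Fin 3) (Fin 3) ℝ) (hT : T = matE ∨ T = matF) : ∀ i j, 0 ≤ T i j := by
  rcases hT with rfl | rfl
  exacts [hEnn, hFnn]

lemma main_bound : ∀ l : List (Matrix (Fin 3) (Fin 3) ℝ),
    (∀ T ∈ l, T = matE ∨ T = matF) →
    ∃ q, (q = v ∨ q = w1 ∨ q = w2) ∧ ∀ i, l.prod.mulVec v i ≤ r ^ l.length * q i := by
  intro l
  induction l with
  | nil => intro _; exact ⟨v, Or.inl rfl, by simp⟩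
  | cons T l ih =>
    intro h
    obtain ⟨q, hq, hb⟩ := ih (fun S hS => h S (List.mem_cons_of_mem _ hS))
    obtain ⟨q', hq', hs⟩ := step T q (h T (List.mem_cons_self)) hq
    refine ⟨q', hq', ?_⟩
    intro i
    have hTnn := Tnn T (h T (List.mem_cons_self))
    have h1 : (T :: l).prod.mulVec v = T.mulVec (l.prod.mulVec v) := by
      rw [List.prod_cons, Matrix.mulVec_mulVec]
    rw [h1]
    have c1 : T.mulVec (l.prod.mulVec v) i ≤ T.mulVec (fun j => r ^ l.length * q j) i := by
      simp only [Matrix.mulVec, dotProduct]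
      exact Finset.sum_le_sum fun j _ => mul_le_mul_of_nonneg_left (hb j) (hTnn i j)
    have c2 : T.mulVec (fun j => r ^ l.length * q j) i = r ^ l.length * T.mulVec q i := by
      simp only [Matrix.mulVec, dotProduct, Finset.mul_sum]
      exact Finset.sum_congr rfl fun j _ => by ring
    have c3 : r ^ l.length * T.mulVec q i ≤ r ^ l.length * (r * q' i) :=
      mul_le_mul_of_nonneg_left (hs i) (pow_nonneg hrpos.le _)
    calc T.mulVec (l.prod.mulVec v) i ≤ r ^ l.length * (r * q' i) := by
          rw [← c2] at c3; exact le_trans c1 c3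
      _ = r ^ (T :: l).length * q' i := by
          simp [List.length_cons, pow_succ]; ring

lemma prod_entries_nn : ∀ l : List (Matrix (Fin 3) (Fin 3) ℝ),
    (∀ T ∈ l, T = matE ∨ T = matF) → ∀ i j, 0 ≤ l.prod i j := by
  intro l
  induction l with
  | nil =>
    intro _ i j
    simp [Matrix.one_apply]
    split <;> norm_num
  | cons T l ih =>
    intro h i j
    rw [List.prod_cons, Matrix.mul_apply]
    exact Finset.sum_nonneg fun k _ => mul_nonneg
      (Tnn T (h T (List.mem_cons_self)) i k)
      (ih (fun S hS => h S (List.mem_cons_of_mem _ hS)) k j)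

lemma normSum_nonneg (M : Matrix (Fin 3) (Fin 3) ℝ) : 0 ≤ normSum M :=
  Finset.sum_nonneg fun i _ => Finset.sum_nonneg fun j _ => abs_nonneg _

lemma normSum_le (l : List (Matrix (Fin 3) (Fin 3) ℝ))
    (h : ∀ T ∈ l, T = matE ∨ T = matF) : normSum l.prod ≤ 6 * r ^ l.length := by
  obtain ⟨q, hq, hb⟩ := main_bound l h
  have hnn := prod_entries_nn l h
  have hrow : ∀ i, ∑ j, |l.prod i j| ≤ 2 * r ^ l.length := by
    intro i
    have h1 : ∑ j, |l.prod i j| = ∑ j, l.prod i j :=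
      Finset.sum_congr rfl fun j _ => abs_of_nonneg (hnn i j)
    have h2 : ∑ j, l.prod i j ≤ ∑ j, l.prod i j * v j :=
      Finset.sum_le_sum fun j _ => le_mul_of_one_le_right (hnn i j) (v_ge_one j)
    have h3 : ∑ j, l.prod i j * v j = l.prod.mulVec v i := by
      simp [Matrix.mulVec, dotProduct]
    have h4 : l.prod.mulVec v i ≤ r ^ l.length * 2 :=
      le_trans (hb i) (mul_le_mul_of_nonneg_left (q_le_two q hq i) (pow_nonneg hrpos.le _))
    rw [h1]
    linarith [h2, h3.le, h3.ge, h4]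
  unfold normSum
  calc ∑ i, ∑ j, |l.prod i j| ≤ ∑ _i : Fin 3, 2 * r ^ l.length :=
        Finset.sum_le_sum fun i _ => hrow i
    _ = 6 * r ^ l.length := by simp [Fin.sum_univ_three]; ring

def xv : Fin 3 → ℝ := ![(ρ-3)/2, (ρ-3)/2, 3]

lemma FE_eq : matF * matE = !![6,0,4;6,0,4;6,0,3] := by
  ext i j
  fin_cases i <;> fin_cases j <;>
    simp [matE, matF, Matrix.mul_apply, Fin.sum_univ_three] <;> norm_num

lemma eig : (matF * matE).mulVec xv = ρ • xv := by
  rw [FE_eq]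
  funext i
  fin_cases i
  · simp [xv, Matrix.mulVec, dotProduct, Fin.sum_univ_three, Matrix.vecHead, Matrix.vecTail]
    linear_combination (-1/2) * hρ2
  · simp [xv, Matrix.mulVec, dotProduct, Fin.sum_univ_three, Matrix.vecHead, Matrix.vecTail]
    linear_combination (-1/2) * hρ2
  · simp [xv, Matrix.mulVec, dotProduct, Fin.sum_univ_three, Matrix.vecHead, Matrix.vecTail]
    ring

lemma eig_pow : ∀ k : ℕ, ((matF * matE)^k).mulVec xv = ρ^k • xv := by
  intro k
  induction k with
  | zero => simp [Matrix.one_mulVec]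
  | succ k ih =>
    rw [pow_succ', ← Matrix.mulVec_mulVec, ih, Matrix.mulVec_smul, eig, pow_succ']
    rw [smul_smul, mul_comm]

def altL : ℕ → List (Matrix (Fin 3) (Fin 3) ℝ)
  | 0 => []
  | k+1 => matF :: matE :: altL k

lemma altL_length (k : ℕ) : (altL k).length = 2 * k := by
  induction k with
  | zero => rfl
  | succ k ih => simp [altL, ih]; ring

lemma altL_mem (k : ℕ) : ∀ T ∈ altL k, T = matE ∨ T = matF := by
  induction k with
  | zero => intro T hT; simp [altL] at hT
  | succ k ih =>
    intro T hT
    simp only [altL, List.mem_cons] at hT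
    rcases hT with rfl | rfl | hT
    · right; rfl
    · left; rfl
    · exact ih T hT

lemma altL_prod (k : ℕ) : (altL k).prod = (matF * matE)^k := by
  induction k with
  | zero => simp [altL]
  | succ k ih => simp [altL, List.prod_cons, ih, pow_succ']; rw [Matrix.mul_assoc]

lemma lower_bound (k : ℕ) : ρ^k ≤ normSum ((matF * matE)^k) := by
  have hnn : ∀ i j, 0 ≤ ((matF * matE)^k) i j := by
    have := prod_entries_nn (altL k) (altL_mem k)
    rwa [altL_prod] at this
  have hx0 : ∑ j, ((matF * matE)^k) 0 j * xv j = ρ^k * ((ρ-3)/2) := by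
    have h := congrFun (eig_pow k) 0
    simp only [Matrix.mulVec, dotProduct, Pi.smul_apply, smul_eq_mul] at h
    rw [h]; simp [xv]
  have hxle : ∀ j, xv j ≤ (ρ-3)/2 := by
    intro j; fin_cases j <;> simp [xv] <;> linarith [hρlb]
  have hs2 : 0 < (ρ-3)/2 := by linarith [hρlb]
  have h1 : ρ^k * ((ρ-3)/2) ≤ (∑ j, ((matF * matE)^k) 0 j) * ((ρ-3)/2) := by
    rw [← hx0, Finset.sum_mul]
    exact Finset.sum_le_sum fun j _ => mul_le_mul_of_nonneg_left (hxle j) (hnn 0 j)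
  have h2 : ρ^k ≤ ∑ j, ((matF * matE)^k) 0 j :=
    le_of_mul_le_mul_right (by linarith [h1]) hs2
  have h3 : ∑ j, ((matF * matE)^k) 0 j = ∑ j, |((matF * matE)^k) 0 j| :=
    Finset.sum_congr rfl fun j _ => (abs_of_nonneg (hnn 0 j)).symm
  unfold normSum
  have h4 : ∑ j, |((matF * matE)^k) 0 j| ≤ ∑ i, ∑ j, |((matF * matE)^k) i j| :=
    Finset.single_le_sum (f := fun i => ∑ j, |((matF * matE)^k) i j|)
      (fun i _ => Finset.sum_nonneg fun j _ => abs_nonneg _) (Finset.mem_univ 0)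
  linarith [h2, h3.le, h4]

def Sset (n : ℕ) : Set ℝ :=
  {x : ℝ | ∃ l : List (Matrix (Fin 3) (Fin 3) ℝ), l.length = n ∧
    (∀ T ∈ l, T = matE ∨ T = matF) ∧ x = normSum l.prod ^ ((1 : ℝ) / n)}

lemma Sset_ub {n : ℕ} (hn : 1 ≤ n) : ∀ x ∈ Sset n, x ≤ 6 ^ ((1:ℝ)/n) * r := by
  rintro x ⟨l, hlen, hmem, rfl⟩
  have hn0 : (n:ℝ) ≠ 0 := Nat.cast_ne_zero.2 (by omega)
  have h1 : normSum l.prod ≤ 6 * r ^ n := by rw [← hlen]; exact normSum_le l hmem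
  have h0 : 0 ≤ normSum l.prod := normSum_nonneg _
  have h2 : normSum l.prod ^ ((1:ℝ)/n) ≤ (6 * r ^ n) ^ ((1:ℝ)/n) :=
    Real.rpow_le_rpow h0 h1 (by positivity)
  have h3 : ((6 * r ^ n : ℝ)) ^ ((1:ℝ)/n) = 6 ^ ((1:ℝ)/n) * r := by
    rw [Real.mul_rpow (by norm_num) (pow_nonneg hrpos.le n)]
    congr 1
    rw [← Real.rpow_natCast r n, ← Real.rpow_mul hrpos.le]
    rw [show (n:ℝ) * ((1:ℝ)/n) = 1 by field_simp, Real.rpow_one]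
  rw [← h3]
  exact h2

lemma bound_nonneg (n : ℕ) : (0:ℝ) ≤ 6 ^ ((1:ℝ)/n) * r :=
  mul_nonneg (Real.rpow_nonneg (by norm_num) _) hrpos.le

lemma g_ub {n : ℕ} (hn : 1 ≤ n) : sSup (Sset n) ≤ 6 ^ ((1:ℝ)/n) * r :=
  Real.sSup_le (Sset_ub hn) (bound_nonneg n)

lemma g_nonneg (n : ℕ) : 0 ≤ sSup (Sset n) :=
  Real.sSup_nonneg (by
    rintro x ⟨l, _, _, rfl⟩
    exact Real.rpow_nonneg (normSum_nonneg _) _)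

lemma g_lb {k : ℕ} (hk : 1 ≤ k) : r ≤ sSup (Sset (2*k)) := by
  have hmem : normSum ((matF * matE)^k) ^ ((1:ℝ)/((2*k : ℕ):ℝ)) ∈ Sset (2*k) :=
    ⟨altL k, altL_length k, altL_mem k, by rw [altL_prod]⟩
  have hb : BddAbove (Sset (2*k)) := ⟨6 ^ ((1:ℝ)/((2*k : ℕ):ℝ)) * r, Sset_ub (by omega)⟩
  refine le_trans ?_ (le_csSup hb hmem)
  have h2k : ((2*k : ℕ):ℝ) ≠ 0 := Nat.cast_ne_zero.2 (by omega)
  have e : (ρ ^ k) ^ ((1:ℝ)/((2*k : ℕ):ℝ)) = r := by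
    have h : (ρ : ℝ) ^ k = r ^ (2*k) := by rw [← hr2, ← pow_mul]
    rw [h, ← Real.rpow_natCast r (2*k), ← Real.rpow_mul hrpos.le]
    rw [show ((2*k:ℕ):ℝ) * ((1:ℝ)/((2*k : ℕ):ℝ)) = 1 by field_simp, Real.rpow_one]
  rw [← e]
  exact Real.rpow_le_rpow (pow_nonneg hρpos.le k) (lower_bound k) (by positivity)

lemma tendsto_bound :
    Filter.Tendsto (fun n : ℕ => (6:ℝ) ^ ((1:ℝ)/n) * r) Filter.atTop (nhds r) := by
  have h1 : Filter.Tendsto (fun n : ℕ => (1:ℝ)/n) Filter.atTop (nhds 0) :=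
    tendsto_one_div_atTop_nhds_zero_nat
  have hc : ContinuousAt (fun y : ℝ => (6:ℝ) ^ y) 0 :=
    Real.continuousAt_const_rpow (by norm_num)
  have h2 : Filter.Tendsto (fun n : ℕ => (6:ℝ) ^ ((1:ℝ)/n)) Filter.atTop (nhds 1) := by
    have := hc.tendsto.comp h1
    simpa [Real.rpow_zero, Function.comp_def] using this
  simpa [one_mul] using h2.mul_const r

lemma g_bddAbove :
    Filter.IsBoundedUnder (· ≤ ·) Filter.atTop (fun n : ℕ => sSup (Sset n)) := by
  refine ⟨6 * r, ?_⟩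
  rw [Filter.eventually_map]
  filter_upwards [Filter.eventually_ge_atTop 1] with n hn
  have h1 := g_ub hn
  have h6 : (6:ℝ) ^ ((1:ℝ)/n) ≤ 6 := by
    calc (6:ℝ) ^ ((1:ℝ)/n) ≤ (6:ℝ) ^ (1:ℝ) :=
          Real.rpow_le_rpow_of_exponent_le (by norm_num)
            (by
              rw [div_le_one (by exact_mod_cast (by omega : (0:ℕ) < n))]
              exact_mod_cast hn)
      _ = 6 := Real.rpow_one 6
  nlinarith [hrpos, h1, Real.rpow_nonneg (show (0:ℝ) ≤ 6 by norm_num) ((1:ℝ)/n)]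

lemma limsup_eq_r :
    Filter.limsup (fun n : ℕ => sSup (Sset n)) Filter.atTop = r := by
  apply le_antisymm
  · have hle : (fun n : ℕ => sSup (Sset n)) ≤ᶠ[Filter.atTop]
        (fun n : ℕ => (6:ℝ) ^ ((1:ℝ)/n) * r) := by
      filter_upwards [Filter.eventually_ge_atTop 1] with n hn
      exact g_ub hn
    have hco : Filter.IsCoboundedUnder (· ≤ ·) Filter.atTop
        (fun n : ℕ => sSup (Sset n)) := by
      apply Filter.IsBoundedUnder.isCoboundedUnder_le
      exact ⟨0, by
        rw [Filter.eventually_map]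
        exact Filter.Eventually.of_forall fun n => g_nonneg n⟩
    calc Filter.limsup (fun n : ℕ => sSup (Sset n)) Filter.atTop
        ≤ Filter.limsup (fun n : ℕ => (6:ℝ) ^ ((1:ℝ)/n) * r) Filter.atTop :=
          Filter.limsup_le_limsup hle hco tendsto_bound.isBoundedUnder_le
      _ = r := tendsto_bound.limsup_eq
  · apply Filter.le_limsup_of_frequently_le _ g_bddAbove
    rw [Filter.frequently_atTop]
    intro a
    exact ⟨2*(a+1), by omega, g_lb (by omega)⟩

end JSRaux
end

open scoped ENNReal

lemma sqrt105_sq : Real.sqrt 105 ^ 2 = 105 := Real.sq_sqrt (by norm_num)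

lemma FE_explicit : matF * matE = !![6,0,4;6,0,4;6,0,3] := JSRaux.FE_eq

lemma spec_FE : spectrum ℝ (matF * matE) =
    {0, (9 + Real.sqrt 105)/2, (9 - Real.sqrt 105)/2} := by
  have h105 := sqrt105_sq
  ext z
  rw [spectrum.mem_iff, Matrix.isUnit_iff_isUnit_det, isUnit_iff_ne_zero, not_not, FE_explicit]
  have hM : (algebraMap ℝ (Matrix (Fin 3) (Fin 3) ℝ)) z - !![6,0,4;6,0,4;6,0,3]
      = !![z-6,0,-4;-6,z,-4;-6,0,z-3] := by
    ext i j
    fin_cases i <;> fin_cases j <;>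
      simp [Matrix.algebraMap_matrix_apply, Matrix.vecHead, Matrix.vecTail]
  rw [hM]
  have hdet : (!![z-6,0,-4;-6,z,-4;-6,0,z-3] : Matrix (Fin 3) (Fin 3) ℝ).det
      = z^3 - 9*z^2 - 6*z := by
    simp [Matrix.det_fin_three, Matrix.vecHead, Matrix.vecTail]; ring
  rw [hdet]
  constructor
  · intro h
    simp only [Set.mem_insert_iff, Set.mem_singleton_iff]
    have hz : z * (z - (9 + Real.sqrt 105)/2) * (z - (9 - Real.sqrt 105)/2) = 0 := by
      linear_combination h - z/4 * h105
    rcases mul_eq_zero.1 hz with h1 | h2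
    · rcases mul_eq_zero.1 h1 with h3 | h4
      · left; exact h3
      · right; left; linarith
    · right; right; linarith
  · intro h
    simp only [Set.mem_insert_iff, Set.mem_singleton_iff] at h
    rcases h with h | h | h <;> subst h
    · norm_num
    · linear_combination ((9 + Real.sqrt 105)/8) * h105
    · linear_combination ((9 - Real.sqrt 105)/8) * h105

lemma specrad_FE : spectralRadius ℝ (matF * matE) = ENNReal.ofReal ((9 + Real.sqrt 105) / 2) := by
  rw [spectralRadius, spec_FE]
  rw [show ({0, (9 + Real.sqrt 105)/2, (9 - Real.sqrt 105)/2} : Set ℝ)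
    = insert 0 (insert ((9 + Real.sqrt 105)/2) {(9 - Real.sqrt 105)/2}) from rfl]
  rw [iSup_insert, iSup_insert, iSup_singleton]
  have h1 : (0:ℝ) ≤ (9 + Real.sqrt 105)/2 := by positivity
  have hb : ((‖(9 - Real.sqrt 105)/2‖₊ : ℝ≥0∞)) ≤ ENNReal.ofReal ((9 + Real.sqrt 105)/2) := by
    have hle : ‖(9 - Real.sqrt 105)/2‖ ≤ (9 + Real.sqrt 105)/2 := by
      rw [Real.norm_eq_abs, abs_le]
      constructor <;> nlinarith [JSRaux.sqrt105_lb, JSRaux.sqrt105_ub]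
    calc ((‖(9 - Real.sqrt 105)/2‖₊ : ℝ≥0∞)) = ENNReal.ofReal ‖(9 - Real.sqrt 105)/2‖ := by
          rw [← Real.enorm_eq_ofReal (norm_nonneg _), enorm_eq_nnnorm, nnnorm_norm]
      _ ≤ _ := ENNReal.ofReal_le_ofReal hle
  rw [← enorm_eq_nnnorm ((9 + Real.sqrt 105)/2), Real.enorm_eq_ofReal h1]
  simp only [nnnorm_zero, ENNReal.coe_zero]
  rw [sup_eq_left.2 hb]
  simp

/-- The joint spectral radius of `{E, F}`, namely
`limsup_{n→∞} max{‖T₁T₂⋯Tₙ‖^{1/n} : Tᵢ ∈ {E,F}}`, equals `√((9 + √105)/2)`, the square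
root of the spectral radius of the product `FE`. -/
theorem jointSpectralRadius_EF :
    Filter.limsup (fun n : ℕ =>
        sSup {x : ℝ | ∃ l : List (Matrix (Fin 3) (Fin 3) ℝ), l.length = n ∧
          (∀ T ∈ l, T = matE ∨ T = matF) ∧ x = normSum l.prod ^ ((1 : ℝ) / n)})
        Filter.atTop = Real.sqrt ((9 + Real.sqrt 105) / 2) ∧
      spectralRadius ℝ (matF * matE) = ENNReal.ofReal ((9 + Real.sqrt 105) / 2) := by
  constructor
  · exact JSRaux.limsup_eq_r
  · exact specrad_FE
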